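/- Consistency mixed with stability determines the quasi-optimality constant: assume P : V → X (range in S) is quasi-optimal, let Π_S : X → X be the orthogonal projection onto S, and let δ_V ≥ 0 be the smallest constant such that ‖Π_S v − P v‖ ≤ δ_V · ‖v − Π_S v‖ for all v ∈ V (such a constant exists). Then the quasi-optimality constant satisfies Cqopt = √(1 + δ_V²). -/

import Mathlib

lemma aux_infDist_eq {X : Type*} [NormedAddCommGroup X] [InnerProductSpace ℝ X]
    (S : Submodule ℝ X) [S.HasOrthogonalProjection] (v : X) :
    Metric.infDist v (S : Set X) = ‖v - (S.orthogonalProjection v : X)‖ := by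
  rw [show (S.orthogonalProjection v : X) = S.starProjection v from rfl,
    Submodule.starProjection_minimal, Metric.infDist_eq_iInf]
  congr 1; ext y; rw [dist_eq_norm]

theorem quasiOptimality_constant_eq_sqrt_one_add_deltaV_sq
    {X : Type*} [NormedAddCommGroup X] [InnerProductSpace ℝ X] [CompleteSpace X]
    (V S : Submodule ℝ X) [CompleteSpace V] [FiniteDimensional ℝ S]
    (hSne : S ≠ ⊥) (hsum : V ⊔ S = ⊤)
    (P : V →ₗ[ℝ] X) (hrange : ∀ v : V, P v ∈ S)
    (hqo : ∃ C : ℝ, ∀ v : V, ‖(v : X) - P v‖ ≤ C * Metric.infDist (v : X) (S : Set X))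
    (δV : ℝ)
    (hδV : IsLeast {d : ℝ | 0 ≤ d ∧ ∀ v : V,
        ‖((S.orthogonalProjection (v : X) : X)) - P v‖ ≤
          d * ‖(v : X) - (S.orthogonalProjection (v : X) : X)‖} δV)
    (Cqopt : ℝ)
    (hCqopt : IsLeast {C : ℝ | ∀ v : V,
        ‖(v : X) - P v‖ ≤ C * Metric.infDist (v : X) (S : Set X)} Cqopt) :
    Cqopt = Real.sqrt (1 + δV ^ 2) := by
  obtain ⟨⟨hδ0, hδb⟩, hδl⟩ := hδV
  obtain ⟨hCb, hCl⟩ := hCqopt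
  -- Pythagoras : for v ∈ V, ‖v - P v‖² = ‖v - Πv‖² + ‖Πv - P v‖²
  have pyth : ∀ v : V, ‖(v : X) - P v‖ ^ 2 =
      ‖(v : X) - (S.orthogonalProjection (v : X) : X)‖ ^ 2 +
      ‖(S.orthogonalProjection (v : X) : X) - P v‖ ^ 2 := by
    intro v
    set w := (S.orthogonalProjection (v : X) : X)
    have hdecomp : (v : X) - P v = ((v : X) - w) + (w - P v) := by abel
    have hinner : @inner ℝ X _ ((v : X) - w) (w - P v) = 0 := by
      have h1 : (v : X) - w ∈ Sᗮ := Submodule.sub_starProjection_mem_orthogonal (K := S) (v : X)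
      have h2 : w - P v ∈ S := S.sub_mem (S.orthogonalProjection (v : X)).2 (hrange v)
      rw [real_inner_comm]; exact h1 _ h2
    rw [hdecomp]
    rw [← real_inner_self_eq_norm_sq, ← real_inner_self_eq_norm_sq,
      ← real_inner_self_eq_norm_sq, inner_add_add_self]
    have h2 : @inner ℝ X _ (w - P v) ((v : X) - w) = 0 := by
      rw [real_inner_comm]; exact hinner
    rw [h2]
    try rw [hinner]
    ring
  -- upper bound: √(1+δ²) is in the quasi-optimality set
  have hub : Cqopt ≤ Real.sqrt (1 + δV ^ 2) := by
    apply hCl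
    intro v
    rw [aux_infDist_eq]
    set a := ‖(v : X) - (S.orthogonalProjection (v : X) : X)‖
    have ha : 0 ≤ a := norm_nonneg _
    have h1 : ‖(v : X) - P v‖ ^ 2 ≤ (1 + δV ^ 2) * a ^ 2 := by
      have := hδb v
      nlinarith [pyth v, norm_nonneg ((S.orthogonalProjection (v : X) : X) - P v)]
    have h2 : ‖(v : X) - P v‖ ≤ Real.sqrt ((1 + δV ^ 2) * a ^ 2) := by
      rw [← Real.sqrt_sq (norm_nonneg _)]
      exact Real.sqrt_le_sqrt h1
    rwa [Real.sqrt_mul (by positivity), Real.sqrt_sq ha] at h2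
  -- Cqopt ≥ 0 and there is v with positive dist, giving Cqopt ≥ 1, and
  -- δV ≤ √(Cqopt² - 1)
  have hCqopt1 : 1 ≤ Cqopt := by
    by_contra h
    push_neg at h
    -- then for all v, infDist v S ≤ Cqopt * infDist v S with ‖v-Πv‖ ≤ ‖v-Pv‖,
    -- so infDist v S = 0 for all v, so condition is C-free, so set has no least.
    have hzero : ∀ v : V, Metric.infDist (v : X) (S : Set X) = 0 := by
      intro v
      have hd := hCb v
      have hle : Metric.infDist (v : X) (S : Set X) ≤ ‖(v : X) - P v‖ := by
        rw [aux_infDist_eq]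
        nlinarith [pyth v, norm_nonneg ((S.orthogonalProjection (v : X) : X) - P v),
          norm_nonneg ((v : X) - (S.orthogonalProjection (v : X) : X)),
          norm_nonneg ((v : X) - P v)]
      have hdn := Metric.infDist_nonneg (x := (v : X)) (s := (S : Set X))
      nlinarith
    have : ∀ v : V, ‖(v : X) - P v‖ = 0 := by
      intro v
      have := hCb v
      rw [hzero v] at this
      have := norm_nonneg ((v : X) - P v)
      linarith [hCb v, (hzero v) ▸ (hCb v)]
    have hmem : (Cqopt - 1) ∈ {C : ℝ | ∀ v : V,
        ‖(v : X) - P v‖ ≤ C * Metric.infDist (v : X) (S : Set X)} := by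
      intro v; rw [hzero v, this v]; simp
    have := hCl hmem
    linarith
  have hlb : Real.sqrt (1 + δV ^ 2) ≤ Cqopt := by
    have hδle : δV ≤ Real.sqrt (Cqopt ^ 2 - 1) := by
      apply hδl
      refine ⟨Real.sqrt_nonneg _, fun v => ?_⟩
      set a := ‖(v : X) - (S.orthogonalProjection (v : X) : X)‖
      have ha : 0 ≤ a := norm_nonneg _
      have hb := hCb v
      rw [aux_infDist_eq] at hb
      have h1 : ‖(S.orthogonalProjection (v : X) : X) - P v‖ ^ 2 ≤
          (Cqopt ^ 2 - 1) * a ^ 2 := by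
        nlinarith [pyth v, norm_nonneg ((v : X) - P v)]
      have h2 : ‖(S.orthogonalProjection (v : X) : X) - P v‖ ≤
          Real.sqrt ((Cqopt ^ 2 - 1) * a ^ 2) := by
        rw [← Real.sqrt_sq (norm_nonneg _)]
        exact Real.sqrt_le_sqrt h1
      rwa [Real.sqrt_mul (by nlinarith), Real.sqrt_sq ha] at h2
    have hδsq : δV ^ 2 ≤ Cqopt ^ 2 - 1 := by
      have := Real.sq_sqrt (show (0:ℝ) ≤ Cqopt ^ 2 - 1 by nlinarith)
      nlinarith [Real.sqrt_nonneg (Cqopt ^ 2 - 1)]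
    calc Real.sqrt (1 + δV ^ 2) ≤ Real.sqrt (Cqopt ^ 2) :=
          Real.sqrt_le_sqrt (by linarith)
      _ = Cqopt := Real.sqrt_sq (by linarith)
  linarith
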